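/- Let a₁,…,a_k be positive rationals with notation as before (S_i generated by 1, a₁,…,a_i; G_i its group; q_i = [G_i : G_{i−1}]), and suppose additionally a_{i+1} > q_i·a_i for all 1 ≤ i ≤ k−1. Then |S_i ∩ [n−1, n)| = q₁⋯q_i for all integers n ≥ q_i·a_i. -/

import Mathlib

open AddSubgroup

lemma den_clos_submonoid (s : Set ℚ) :
    AddSubgroup.closure (AddSubmonoid.closure s : Set ℚ) = AddSubgroup.closure s := by
  apply le_antisymm
  · rw [AddSubgroup.closure_le]
    exact (AddSubmonoid.closure_le (S := (AddSubgroup.closure s).toAddSubmonoid)).mpr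
      (AddSubgroup.subset_closure (k := s))
  · exact AddSubgroup.closure_mono AddSubmonoid.subset_closure

lemma mem_zmul_iff (g x : ℚ) : x ∈ zmultiples g ↔ ∃ m : ℤ, (m : ℚ) * g = x := by
  rw [AddSubgroup.mem_zmultiples_iff]; simp [zsmul_eq_mul]

lemma a_eq (d : ℕ) (hd : 0 < d) (a : ℚ) :
    a = ((a * d).num : ℚ) / (((a * d).den : ℚ) * d) := by
  have h : ((a*d).num : ℚ) / ((a*d).den : ℚ) = a * d := Rat.num_div_den _
  have hd' : (d:ℚ) ≠ 0 := by positivity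
  have hden : ((a*d).den : ℚ) ≠ 0 := by exact_mod_cast (a*d).den_nz
  rw [div_eq_iff hden] at h
  rw [eq_div_iff (by positivity : ((a*d).den : ℚ) * d ≠ 0), h]
  ring

lemma sup_zmul (d : ℕ) (hd : 0 < d) (a : ℚ) :
    zmultiples ((d:ℚ))⁻¹ ⊔ zmultiples a
      = zmultiples (((d * (a * (d:ℚ)).den : ℕ) : ℚ))⁻¹ := by
  set s : ℕ := (a * (d:ℚ)).den with hs
  set p : ℤ := (a * (d:ℚ)).num with hp
  have hs0 : 0 < s := (a * (d:ℚ)).pos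
  have hd' : (d:ℚ) ≠ 0 := by positivity
  have hs' : (s:ℚ) ≠ 0 := by positivity
  have hae : a = (p : ℚ) / ((s : ℚ) * d) := a_eq d hd a
  have hD : ((d * s : ℕ) : ℚ) = (d : ℚ) * s := by push_cast; ring
  apply le_antisymm
  · apply sup_le <;> rw [zmultiples_le, mem_zmul_iff]
    · exact ⟨s, by rw [hD]; field_simp; norm_cast⟩
    · exact ⟨p, by rw [hD, hae]; field_simp⟩
  · rw [zmultiples_le]
    have hcop : IsCoprime (s : ℤ) p := by
      rw [Int.isCoprime_iff_gcd_eq_one, Int.gcd_comm]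
      exact (a * (d:ℚ)).reduced
    obtain ⟨u, v, huv⟩ := hcop
    have h1 : u • ((d:ℚ))⁻¹ + v • a = ((d * s : ℕ) : ℚ)⁻¹ := by
      rw [zsmul_eq_mul, zsmul_eq_mul, hD, hae]
      have : ((u * s + v * p : ℤ) : ℚ) = 1 := by exact_mod_cast huv
      push_cast at this ⊢
      field_simp
      linear_combination this
    rw [← h1]
    exact add_mem (mem_sup_left (zsmul_mem (mem_zmultiples _) u))
      (mem_sup_right (zsmul_mem (mem_zmultiples _) v))

lemma relindex_zmul (d s : ℕ) (hd : 0 < d) (hs : 0 < s) :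
    (zmultiples ((d:ℚ))⁻¹).relIndex (zmultiples (((d * s : ℕ):ℚ))⁻¹) = s := by
  have hd' : (d:ℚ) ≠ 0 := by positivity
  have hs' : (s:ℚ) ≠ 0 := by positivity
  set g : ℚ := (((d * s : ℕ):ℚ))⁻¹ with hg
  have hD : ((d * s : ℕ) : ℚ) = (d : ℚ) * s := by push_cast; ring
  have hkey : ((zmultiples ((d:ℚ))⁻¹).comap (zmultiplesHom ℚ g)).index
      = (zmultiples ((d:ℚ))⁻¹).relIndex (zmultiplesHom ℚ g).range :=
    AddSubgroup.index_comap _ _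
  rw [range_zmultiplesHom] at hkey
  rw [← hkey]
  have hcomap : (zmultiples ((d:ℚ))⁻¹).comap (zmultiplesHom ℚ g) = zmultiples (s:ℤ) := by
    ext n
    simp only [AddSubgroup.mem_comap, zmultiplesHom_apply, Int.mem_zmultiples_iff,
      mem_zmul_iff, zsmul_eq_mul]
    constructor
    · rintro ⟨m, hm⟩
      refine ⟨m, ?_⟩
      rw [hg, hD] at hm
      field_simp at hm
      have h2 : ((s:ℚ) * m) * d = (n:ℚ) * d := by rw [← hm]; ring
      have h3 : (s:ℚ) * m = (n:ℚ) := mul_right_cancel₀ hd' h2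
      exact_mod_cast h3.symm
    · rintro ⟨m, hm⟩
      refine ⟨m, ?_⟩
      rw [hg, hD]
      have hn : (n : ℚ) = (s : ℚ) * m := by exact_mod_cast hm
      field_simp [hn]
      linear_combination -hn
  rw [hcomap, Int.index_zmultiples]
  simp

/-- **Corollary (estimate).** With the same notation, if moreover `a_{i+1} > q_i·a_i` for
`1 ≤ i ≤ k-1`, then `|S_i ∩ [n-1, n)| = q₁⋯q_i` for all integers `n ≥ q_i·a_i`. -/
theorem density_estimate
    (k : ℕ) (a : ℕ → ℚ) (ha : ∀ i, 1 ≤ i → i ≤ k → 0 < a i)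
    (S : ℕ → AddSubmonoid ℚ)
    (hS : ∀ i, S i = AddSubmonoid.closure ({1} ∪ (a '' {j | 1 ≤ j ∧ j ≤ i})))
    (G : ℕ → AddSubgroup ℚ)
    (hG : ∀ i, G i = AddSubgroup.closure (S i : Set ℚ))
    (q : ℕ → ℕ) (hq : ∀ i, 1 ≤ i → q i = (G (i - 1)).relIndex (G i))
    (hgrowth : ∀ i, 1 ≤ i → i ≤ k - 1 → (q i : ℚ) * a i < a (i + 1)) :
    ∀ i, 1 ≤ i → i ≤ k → ∀ n : ℤ, (q i : ℚ) * a i ≤ (n : ℚ) →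
      ((S i : Set ℚ) ∩ Set.Ico ((n : ℚ) - 1) (n : ℚ)).encard =
        ((∏ j ∈ Finset.Icc 1 i, q j : ℕ) : ℕ∞) := by
  have hGset : ∀ i, G i = AddSubgroup.closure ({1} ∪ (a '' {j | 1 ≤ j ∧ j ≤ i})) :=
    fun i => by rw [hG i, hS i, den_clos_submonoid]
  have hSmono : ∀ i, S i ≤ S (i+1) := by
    intro i
    rw [hS i, hS (i+1)]
    apply AddSubmonoid.closure_mono
    apply Set.union_subset_union_right
    apply Set.image_mono
    intro j hj
    exact ⟨hj.1, hj.2.trans (Nat.le_succ i)⟩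
  -- main structural induction
  have main : ∀ i, i ≤ k → ∃ d : ℕ, 0 < d ∧ G i = zmultiples ((d:ℚ))⁻¹ ∧
      (∏ j ∈ Finset.Icc 1 i, q j) = d ∧
      ∀ x ∈ G i, ∃ c : ℤ, ∃ y ∈ S i, x = (c : ℚ) + y ∧
        y ≤ ∑ j ∈ Finset.Icc 1 i, ((q j : ℚ) - 1) * a j := by
    intro i
    induction i with
    | zero =>
      intro _
      have hG0 : G 0 = zmultiples (((1:ℕ):ℚ))⁻¹ := by
        rw [hGset 0]
        have hempty : {j | 1 ≤ j ∧ j ≤ 0} = (∅ : Set ℕ) := by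
          ext j; simp; omega
        rw [hempty]
        simp [AddSubgroup.zmultiples_eq_closure]
      refine ⟨1, one_pos, hG0, by simp, ?_⟩
      intro x hx
      rw [hG0, mem_zmul_iff] at hx
      obtain ⟨m, hm⟩ := hx
      refine ⟨m, 0, (S 0).zero_mem, ?_, by simp⟩
      simpa using hm.symm
    | succ i ih =>
      intro hik
      obtain ⟨d, hd0, hGi, hprod, hcond⟩ := ih (Nat.le_of_succ_le hik)
      have ha' : 0 < a (i+1) := ha (i+1) (by omega) hik
      set s : ℕ := (a (i+1) * (d:ℚ)).den with hsdef
      set p : ℤ := (a (i+1) * (d:ℚ)).num with hpdef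
      have hs0 : 0 < s := (a (i+1) * (d:ℚ)).pos
      have hd' : (d:ℚ) ≠ 0 := by positivity
      have hs' : (s:ℚ) ≠ 0 := by positivity
      have hae : a (i+1) = (p : ℚ) / ((s : ℚ) * d) := a_eq d hd0 (a (i+1))
      have hstep : G (i+1) = G i ⊔ zmultiples (a (i+1)) := by
        rw [hGset (i+1), hGset i]
        have hset : {j | 1 ≤ j ∧ j ≤ i+1} = {j | 1 ≤ j ∧ j ≤ i} ∪ {i+1} := by
          ext j
          simp only [Set.mem_setOf_eq, Set.mem_union, Set.mem_singleton_iff]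
          omega
        rw [hset, Set.image_union, Set.image_singleton, ← Set.union_assoc,
          AddSubgroup.closure_union, AddSubgroup.zmultiples_eq_closure]
      have hGsucc : G (i+1) = zmultiples (((d * s : ℕ):ℚ))⁻¹ := by
        rw [hstep, hGi, sup_zmul d hd0 (a (i+1))]
      have hqs : q (i+1) = s := by
        rw [hq (i+1) (by omega)]
        simp only [Nat.add_sub_cancel]
        rw [hGi, hGsucc, relindex_zmul d s hd0 hs0]
      have hsa : ((s:ℤ)) • a (i+1) ∈ G i := by
        rw [hGi, mem_zmul_iff]
        refine ⟨p, ?_⟩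
        rw [zsmul_eq_mul, hae]
        field_simp
        norm_cast
      have haS : a (i+1) ∈ S (i+1) := by
        rw [hS (i+1)]
        exact AddSubmonoid.subset_closure (Or.inr ⟨i+1, ⟨by omega, le_refl _⟩, rfl⟩)
      refine ⟨d * s, by positivity, hGsucc, ?_, ?_⟩
      · rw [Finset.prod_Icc_succ_top (by omega : 1 ≤ i+1), hprod, hqs]
      · intro x hx
        rw [hstep, AddSubgroup.mem_sup] at hx
        obtain ⟨g, hg, z, hz, rfl⟩ := hx
        rw [AddSubgroup.mem_zmultiples_iff] at hz
        obtain ⟨m, rfl⟩ := hz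
        set lam : ℤ := m % s with hlamdef
        set c : ℤ := m / s with hcdef
        have hsz : (s:ℤ) ≠ 0 := by exact_mod_cast hs0.ne'
        have hm : (s:ℤ) * c + lam = m := Int.mul_ediv_add_emod m s
        have hlam0 : 0 ≤ lam := Int.emod_nonneg m hsz
        have hlam1 : lam < s := Int.emod_lt_of_pos m (by exact_mod_cast hs0)
        obtain ⟨c', y, hyS, hy, hyB⟩ := hcond (g + c • ((s:ℤ) • a (i+1)))
          (add_mem hg (zsmul_mem hsa c))
        refine ⟨c', y + lam.toNat • a (i+1),
          add_mem (hSmono i hyS) (nsmul_mem haS lam.toNat), ?_, ?_⟩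
        · have hlt : ((lam.toNat : ℤ) : ℚ) = (lam : ℚ) := by
            rw [Int.toNat_of_nonneg hlam0]
          have hmq : ((s:ℚ) * c + lam) = (m:ℚ) := by exact_mod_cast hm
          rw [smul_smul] at hy
          rw [zsmul_eq_mul] at hy ⊢
          rw [nsmul_eq_mul]
          push_cast at hy hlt ⊢
          linear_combination hy - hmq * a (i+1) - hlt * a (i+1)
        · rw [Finset.sum_Icc_succ_top (by omega : 1 ≤ i+1), hqs]
          have hlamle : ((lam.toNat : ℚ)) ≤ (s:ℚ) - 1 := by
            have : (lam.toNat : ℤ) ≤ (s:ℤ) - 1 := by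
              rw [Int.toNat_of_nonneg hlam0]; omega
            exact_mod_cast this
          have : (lam.toNat : ℕ) • a (i+1) ≤ ((s:ℚ) - 1) * a (i+1) := by
            rw [nsmul_eq_mul]
            exact mul_le_mul_of_nonneg_right hlamle ha'.le
          linarith
  -- positivity of the q's
  have hqpos : ∀ j, 1 ≤ j → j ≤ k → 0 < q j := by
    intro j hj1 hjk
    obtain ⟨d, hd0, -, hprod, -⟩ := main j hjk
    rcases Nat.eq_zero_or_pos (q j) with h0 | h1
    · exfalso
      have : (∏ l ∈ Finset.Icc 1 j, q l) = 0 :=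
        Finset.prod_eq_zero (Finset.mem_Icc.mpr ⟨hj1, le_refl j⟩) h0
      omega
    · exact h1
  -- key estimate
  have key : ∀ i, i ≤ k → 1 ≤ i →
      (∑ j ∈ Finset.Icc 1 i, ((q j : ℚ) - 1) * a j) < (q i : ℚ) * a i := by
    intro i
    induction i with
    | zero => intro _ h; omega
    | succ i ih =>
      intro hik _
      have ha' : 0 < a (i+1) := ha (i+1) (by omega) hik
      have hq1 : (1:ℚ) ≤ (q (i+1) : ℚ) := by
        exact_mod_cast hqpos (i+1) (by omega) hik
      rcases Nat.eq_zero_or_pos i with h0 | h1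
      · subst h0
        rw [show Finset.Icc 1 1 = {1} from rfl, Finset.sum_singleton]
        nlinarith
      · have hgrow := hgrowth i h1 (by omega)
        have hsum := ih (by omega) h1
        rw [Finset.sum_Icc_succ_top (by omega : 1 ≤ i+1)]
        nlinarith
  -- final assembly
  intro i hi1 hik n hn
  obtain ⟨d, hd0, hGi, hprod, hcond⟩ := main i hik
  have hkey := key i hik hi1
  have hd' : (0:ℚ) < (d:ℚ) := by positivity
  have hSsubG : (S i : Set ℚ) ⊆ (G i : Set ℚ) := by
    rw [hG i]; exact AddSubgroup.subset_closure
  have hset : (S i : Set ℚ) ∩ Set.Ico ((n:ℚ)-1) n = (G i : Set ℚ) ∩ Set.Ico ((n:ℚ)-1) n := by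
    apply Set.eq_of_subset_of_subset
    · exact Set.inter_subset_inter_left _ hSsubG
    · rintro x ⟨hxG, hxI⟩
      refine ⟨?_, hxI⟩
      obtain ⟨c, y, hyS, hxy, hyB⟩ := hcond x hxG
      have hy_lt : y < (n:ℚ) := lt_of_le_of_lt hyB (lt_of_lt_of_le hkey hn)
      have hx1 : (n:ℚ) - 1 ≤ x := hxI.1
      have hc : 0 ≤ c := by
        by_contra h
        push_neg at h
        have hc1 : c ≤ -1 := by omega
        have : (c:ℚ) ≤ -1 := by exact_mod_cast hc1
        linarith
      have h1S : (1:ℚ) ∈ S i := by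
        rw [hS i]; exact AddSubmonoid.subset_closure (Or.inl rfl)
      have hx2 : x = c.toNat • (1:ℚ) + y := by
        rw [nsmul_eq_mul, hxy]
        have : ((c.toNat : ℤ) : ℚ) = (c : ℚ) := by rw [Int.toNat_of_nonneg hc]
        push_cast at this ⊢
        linarith
      rw [hx2]
      exact add_mem (nsmul_mem h1S _) hyS
  rw [hset, hGi, hprod]
  have himg : (zmultiples ((d:ℚ))⁻¹ : Set ℚ) ∩ Set.Ico ((n:ℚ)-1) n
      = (fun m : ℤ => (m:ℚ) * (d:ℚ)⁻¹) '' ↑(Finset.Ico ((d:ℤ)*n - d) ((d:ℤ)*n)) := by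
    ext x
    simp only [Set.mem_inter_iff, SetLike.mem_coe, mem_zmul_iff, Set.mem_Ico, Set.mem_image,
      Finset.coe_Ico, Finset.mem_Ico]
    constructor
    · rintro ⟨⟨m, rfl⟩, h1, h2⟩
      have e : (m:ℚ) * (d:ℚ)⁻¹ * d = (m:ℚ) := by field_simp
      refine ⟨m, ⟨?_, ?_⟩, rfl⟩
      · have hqq : ((d:ℚ)*n - d) ≤ (m:ℚ) := by
          nlinarith [mul_le_mul_of_nonneg_right h1 hd'.le]
        have h' : (((d:ℤ)*n - (d:ℤ) : ℤ) : ℚ) ≤ ((m:ℤ) : ℚ) := by push_cast; linarith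
        exact_mod_cast h'
      · have hqq : (m:ℚ) < (d:ℚ)*n := by
          nlinarith [mul_lt_mul_of_pos_right h2 hd']
        have h' : ((m:ℤ) : ℚ) < (((d:ℤ)*n : ℤ) : ℚ) := by push_cast; linarith
        exact_mod_cast h'
    · rintro ⟨m, ⟨h1, h2⟩, rfl⟩
      have h1q : ((d:ℚ)*n - d) ≤ (m:ℚ) := by
        have : (((d:ℤ)*n - (d:ℤ) : ℤ) : ℚ) ≤ ((m:ℤ) : ℚ) := by exact_mod_cast h1
        push_cast at this
        linarith
      have h2q : (m:ℚ) < (d:ℚ)*n := by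
        have : ((m:ℤ) : ℚ) < (((d:ℤ)*n : ℤ) : ℚ) := by exact_mod_cast h2
        push_cast at this
        linarith
      refine ⟨⟨m, rfl⟩, ?_, ?_⟩
      · rw [← div_eq_mul_inv, le_div_iff₀ hd']
        linarith
      · rw [← div_eq_mul_inv, div_lt_iff₀ hd']
        linarith
  rw [himg]
  rw [Set.InjOn.encard_image (by
    intro x _ y _ hxy
    have : (x:ℚ) = y := by
      field_simp at hxy
      exact_mod_cast hxy
    exact_mod_cast this)]
  rw [Set.encard_coe_eq_coe_finsetCard, Int.card_Ico]
  have : (d:ℤ)*n - ((d:ℤ)*n - d) = (d:ℤ) := by ring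
  rw [this, Int.toNat_natCast]
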